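/- Let $0 \le k \le d$ be integers and let $S \subseteq \mathbb{R}^d$ be a set with $\mathcal{H}^{d-k}(S) = 0$. Then the smooth maps from $\mathbb{B}^k$ to $\mathbb{R}^d$ whose image is disjoint from $S$ are dense among all smooth maps in the uniform norm: for every $C^\infty$ map $F : \mathbb{R}^k \to \mathbb{R}^d$ and every $\varepsilon > 0$ there exists a $C^\infty$ map $G : \mathbb{R}^k \to \mathbb{R}^d$ such that $G(\mathbb{B}^k) \cap S = \emptyset$ and $\sup_{x \in \mathbb{B}^k} |G(x) - F(x)| < \varepsilon$. -/

import Mathlib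

open MeasureTheory Metric Set
open scoped ENNReal NNReal Topology
open Classical



lemma gpd_grid_cover (k : ℕ) {r : ℝ} (hr : 0 < r) (hr1 : r ≤ 1) :
    ∃ P : Finset (EuclideanSpace ℝ (Fin k)),
      (Metric.closedBall (0 : EuclideanSpace ℝ (Fin k)) 1 ⊆ ⋃ p ∈ P, Metric.closedBall p r) ∧
      (P.card : ℝ≥0∞) * ENNReal.ofReal (r ^ k) ≤ ENNReal.ofReal ((Real.sqrt k + 2) ^ k) := by
  set m : ℕ := ⌈Real.sqrt k / r⌉₊ + 1 with hm
  have hm0 : (0:ℝ) < m := by positivity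
  let p : (Fin k → Fin m) → EuclideanSpace ℝ (Fin k) :=
    fun j => WithLp.toLp 2 (fun i => -1 + (2 * (j i : ℝ) + 1) / m)
  refine ⟨Finset.image p Finset.univ, ?_, ?_⟩
  · intro x hx
    have hxc : ∀ i, |x i| ≤ 1 := by
      intro i
      have h1 : |x i| = Real.sqrt ((x i)^2) := (Real.sqrt_sq_eq_abs _).symm
      have h2 : ‖x‖ ≤ 1 := mem_closedBall_zero_iff.1 hx
      have h3 : Real.sqrt ((x i)^2) ≤ ‖x‖ := by
        rw [EuclideanSpace.norm_eq]
        apply Real.sqrt_le_sqrt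
        have := Finset.single_le_sum (f := fun i => ‖x i‖^2)
          (fun i _ => by positivity) (Finset.mem_univ i)
        simpa [Real.norm_eq_abs, sq_abs] using this
      linarith [h1 ▸ h3]
    -- choose grid index
    have key : ∀ i : Fin k, ∃ j : Fin m, |x i - (-1 + (2 * (j : ℝ) + 1) / m)| ≤ 1 / m := by
      intro i
      set t : ℝ := (x i + 1) * m / 2 with htdef
      have ht0 : 0 ≤ t := by
        have := (abs_le.1 (hxc i)).1
        have : (0:ℝ) ≤ x i + 1 := by linarith
        positivity
      have htm : t ≤ m := by
        have := (abs_le.1 (hxc i)).2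
        have h2 : x i + 1 ≤ 2 := by linarith
        calc t ≤ 2 * m / 2 := by
              apply div_le_div_of_nonneg_right ?_ (by norm_num)
              exact mul_le_mul_of_nonneg_right h2 hm0.le
          _ = m := by ring
      set j : ℕ := min ⌊t⌋₊ (m - 1) with hjdef
      have hjm : j < m := by
        have : m - 1 < m := by omega
        exact lt_of_le_of_lt (min_le_right _ _) this
      have hjt : (j : ℝ) ≤ t ∧ t ≤ j + 1 := by
        rcases le_or_gt ⌊t⌋₊ (m-1) with h | h
        · have hj : j = ⌊t⌋₊ := min_eq_left h
          constructor
          · rw [hj]; exact Nat.floor_le ht0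
          · rw [hj]; exact (Nat.lt_floor_add_one t).le
        · have hj : j = m - 1 := min_eq_right h.le
          have h1 : ((m:ℝ) - 1) ≤ (⌊t⌋₊:ℝ) := by
            have hc : ((m-1:ℕ):ℝ) ≤ (⌊t⌋₊:ℝ) := Nat.cast_le.2 h.le
            rwa [Nat.cast_sub (by omega : 1 ≤ m), Nat.cast_one] at hc
          have h2 : ((j:ℝ)) = (m:ℝ) - 1 := by
            rw [hj, Nat.cast_sub (by omega : 1 ≤ m), Nat.cast_one]
          constructor
          · rw [h2]; exact le_trans h1 (Nat.floor_le ht0)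
          · rw [h2]; linarith
      refine ⟨⟨j, hjm⟩, ?_⟩
      have hxi : x i = 2 * t / m - 1 := by
        field_simp [htdef]
        rw [htdef]; ring
      have : x i - (-1 + (2 * (j:ℝ) + 1) / m) = (2*t - 2*j - 1)/m := by
        rw [hxi]; field_simp; ring
      rw [this, abs_div, abs_of_pos hm0, div_le_div_iff_of_pos_right hm0]
      rw [abs_le]
      constructor <;> [linarith [hjt.1]; linarith [hjt.2]]
    choose j hj using key
    refine mem_iUnion₂.2 ⟨p j, Finset.mem_image_of_mem p (Finset.mem_univ j), ?_⟩
    rw [mem_closedBall, EuclideanSpace.dist_eq]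
    have hmr : Real.sqrt k / m ≤ r := by
      rw [div_le_iff₀ hm0]
      have h1 : Real.sqrt k / r ≤ ⌈Real.sqrt k / r⌉₊ := Nat.le_ceil _
      have h2 : Real.sqrt k / r ≤ m := le_trans h1 (by exact_mod_cast Nat.le_succ _)
      calc Real.sqrt k = (Real.sqrt k / r) * r := by field_simp
        _ ≤ m * r := mul_le_mul_of_nonneg_right h2 hr.le
        _ = r * m := mul_comm _ _
    calc Real.sqrt (∑ i, dist (x i) (p j i) ^ 2)
        ≤ Real.sqrt (∑ _i : Fin k, (1/m)^2) := by
          apply Real.sqrt_le_sqrt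
          apply Finset.sum_le_sum
          intro i _
          have : dist (x i) (p j i) ≤ 1/m := by
            rw [Real.dist_eq]; exact hj i
          exact pow_le_pow_left₀ dist_nonneg this 2
      _ = Real.sqrt (k * (1/m)^2) := by rw [Finset.sum_const]; simp [mul_comm]
      _ = Real.sqrt k * (1/m) := by
          rw [Real.sqrt_mul (by positivity), Real.sqrt_sq (by positivity)]
      _ = Real.sqrt k / m := by ring
      _ ≤ r := hmr
  · have hcard : (Finset.image p Finset.univ).card ≤ m ^ k := by
      calc (Finset.image p Finset.univ).card ≤ (Finset.univ : Finset (Fin k → Fin m)).card :=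
            Finset.card_image_le
        _ = m ^ k := by simp [Fintype.card_fun]
    calc ((Finset.image p Finset.univ).card : ℝ≥0∞) * ENNReal.ofReal (r ^ k)
        ≤ (m ^ k : ℕ) * ENNReal.ofReal (r ^ k) := by
          gcongr
          all_goals exact_mod_cast hcard
      _ = ENNReal.ofReal ((m:ℝ) ^ k) * ENNReal.ofReal (r ^ k) := by
          congr 1
          rw [← ENNReal.ofReal_natCast]
          norm_cast
      _ = ENNReal.ofReal ((m * r) ^ k) := by
          rw [← ENNReal.ofReal_mul (by positivity), mul_pow]
      _ ≤ ENNReal.ofReal ((Real.sqrt k + 2) ^ k) := by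
          apply ENNReal.ofReal_le_ofReal
          apply pow_le_pow_left₀ (by positivity)
          have h1 : (m:ℝ) ≤ Real.sqrt k / r + 2 := by
            have := Nat.ceil_lt_add_one (by positivity : (0:ℝ) ≤ Real.sqrt k / r)
            push_cast [hm]
            linarith
          calc (m:ℝ) * r ≤ (Real.sqrt k / r + 2) * r := mul_le_mul_of_nonneg_right h1 hr.le
            _ = Real.sqrt k + 2 * r := by field_simp
            _ ≤ Real.sqrt k + 2 := by linarith


lemma gpd_zero_of_le {a c : ℝ≥0∞} (hc : c ≠ ⊤)
    (h : ∀ ρ : ℝ, 0 < ρ → ρ ≤ 1 → a ≤ c * ENNReal.ofReal ρ) : a = 0 := by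
  refine le_antisymm ?_ (zero_le)
  have h0 : Filter.Tendsto (fun n : ℕ => ENNReal.ofReal (1 / (n + 1))) Filter.atTop (𝓝 0) := by
    rw [show (0:ℝ≥0∞) = ENNReal.ofReal 0 by simp]
    exact (ENNReal.continuous_ofReal.tendsto 0).comp tendsto_one_div_add_atTop_nhds_zero_nat
  have ht : Filter.Tendsto (fun n : ℕ => c * ENNReal.ofReal (1 / (n + 1)))
      Filter.atTop (𝓝 0) := by
    have := ENNReal.Tendsto.const_mul h0 (Or.inr hc)
    simpa using this
  refine ge_of_tendsto' ht fun n => h _ (by positivity) ?_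
  rw [div_le_one (by positivity)]
  linarith [Nat.cast_nonneg (α := ℝ) n]

lemma gpd_tube (k d : ℕ) (F : EuclideanSpace ℝ (Fin k) → EuclideanSpace ℝ (Fin d))
    {L : ℝ≥0} (hL : LipschitzOnWith L F (closedBall 0 1))
    {t : Set (EuclideanSpace ℝ (Fin d))} (hne : t.Nonempty) (hdiam : EMetric.diam t ≤ 1)
    {ρ : ℝ} (hρ : 0 < ρ) (hρ1 : ρ ≤ 1) :
    ∃ N : ℕ, (N : ℝ≥0∞) * ENNReal.ofReal (ρ ^ k) ≤ ENNReal.ofReal ((Real.sqrt k + 2) ^ k) ∧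
      volume {v : EuclideanSpace ℝ (Fin d) |
          ∃ x ∈ closedBall (0 : EuclideanSpace ℝ (Fin k)) 1, F x + v ∈ t} ≤
        (N : ℝ≥0∞) * (ENNReal.ofReal (((EMetric.diam t).toReal + 2 * L * ρ) ^ d) *
          volume (ball (0 : EuclideanSpace ℝ (Fin d)) 1)) := by
  classical
  obtain ⟨y, hy⟩ := hne
  obtain ⟨P, hP, hPcard⟩ := gpd_grid_cover k hρ hρ1
  set R := (EMetric.diam t).toReal with hR
  have hR0 : 0 ≤ R := ENNReal.toReal_nonneg
  have hfin : EMetric.diam t ≠ ⊤ := (lt_of_le_of_lt hdiam (by norm_num)).ne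
  have hdist : ∀ a ∈ t, dist a y ≤ R := by
    intro a ha
    have h1 := EMetric.edist_le_diam_of_mem ha hy
    rw [dist_edist]
    exact ENNReal.toReal_mono hfin h1
  set c : EuclideanSpace ℝ (Fin k) → EuclideanSpace ℝ (Fin d) := fun p =>
    if h : (closedBall (0 : EuclideanSpace ℝ (Fin k)) 1 ∩ closedBall p ρ).Nonempty
    then y - F h.choose else y with hc
  refine ⟨P.card, hPcard, ?_⟩
  have hsub : {v : EuclideanSpace ℝ (Fin d) |
      ∃ x ∈ closedBall (0 : EuclideanSpace ℝ (Fin k)) 1, F x + v ∈ t} ⊆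
      ⋃ p ∈ P, closedBall (c p) (R + 2 * L * ρ) := by
    rintro v ⟨x, hx, hxt⟩
    obtain ⟨p, hpP, hxp⟩ := Set.mem_iUnion₂.1 (hP hx)
    have hne' : (closedBall (0 : EuclideanSpace ℝ (Fin k)) 1 ∩ closedBall p ρ).Nonempty :=
      ⟨x, hx, hxp⟩
    refine Set.mem_iUnion₂.2 ⟨p, hpP, ?_⟩
    rw [mem_closedBall]
    have hxpel := hne'.choose_spec
    set x' := hne'.choose with hx'
    have hcp : c p = y - F x' := dif_pos hne'
    have h1 : dist (F x) (F x') ≤ (L:ℝ) * (2*ρ) := by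
      have hdxx : dist x x' ≤ 2 * ρ := by
        have ha : dist x p ≤ ρ := mem_closedBall.1 hxp
        have hb : dist x' p ≤ ρ := mem_closedBall.1 hxpel.2
        calc dist x x' ≤ dist x p + dist x' p := dist_triangle_right _ _ _
          _ ≤ 2 * ρ := by linarith
      calc dist (F x) (F x') ≤ (L:ℝ) * dist x x' := hL.dist_le_mul x hx x' hxpel.1
        _ ≤ (L:ℝ) * (2*ρ) := by
            apply mul_le_mul_of_nonneg_left hdxx L.coe_nonneg
    have h2 : dist (F x + v) y ≤ R := hdist _ hxt
    rw [hcp]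
    have : v - (y - F x') = (F x + v - y) - (F x - F x') := by abel
    rw [dist_eq_norm, this]
    calc ‖(F x + v - y) - (F x - F x')‖ ≤ ‖F x + v - y‖ + ‖F x - F x'‖ := norm_sub_le _ _
      _ ≤ R + 2 * L * ρ := by
          rw [dist_eq_norm] at h2
          rw [dist_eq_norm] at h1
          linarith
  calc volume {v : EuclideanSpace ℝ (Fin d) |
      ∃ x ∈ closedBall (0 : EuclideanSpace ℝ (Fin k)) 1, F x + v ∈ t}
      ≤ volume (⋃ p ∈ P, closedBall (c p) (R + 2 * L * ρ)) := measure_mono hsub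
    _ ≤ ∑ p ∈ P, volume (closedBall (c p) (R + 2 * L * ρ)) := measure_biUnion_finset_le _ _
    _ = ∑ p ∈ P, ENNReal.ofReal ((R + 2 * L * ρ) ^ d) *
        volume (ball (0 : EuclideanSpace ℝ (Fin d)) 1) := by
        refine Finset.sum_congr rfl fun p _ => ?_
        rw [Measure.addHaar_closedBall volume _ (by positivity)]
        rw [finrank_euclideanSpace_fin]
    _ = (P.card : ℝ≥0∞) * (ENNReal.ofReal ((R + 2 * L * ρ) ^ d) *
        volume (ball (0 : EuclideanSpace ℝ (Fin d)) 1)) := by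
        rw [Finset.sum_const, nsmul_eq_mul]


lemma gpd_slab (k d : ℕ) (hkd : k < d)
    (F : EuclideanSpace ℝ (Fin k) → EuclideanSpace ℝ (Fin d))
    {L : ℝ≥0} (hL : LipschitzOnWith L F (closedBall 0 1))
    {t : Set (EuclideanSpace ℝ (Fin d))} (hdiam : EMetric.diam t ≤ 1) :
    volume {v : EuclideanSpace ℝ (Fin d) |
        ∃ x ∈ closedBall (0 : EuclideanSpace ℝ (Fin k)) 1, F x + v ∈ t} ≤
      (ENNReal.ofReal ((Real.sqrt k + 2) ^ k) * ENNReal.ofReal ((1 + 2 * L) ^ d) *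
        volume (ball (0 : EuclideanSpace ℝ (Fin d)) 1)) *
        EMetric.diam t ^ ((d : ℝ) - (k : ℝ)) := by
  have hfin : EMetric.diam t ≠ ⊤ := (lt_of_le_of_lt hdiam (by norm_num)).ne
  have hs : (0:ℝ) < (d : ℝ) - (k : ℝ) := by
    have := Nat.cast_lt (α := ℝ) |>.2 hkd
    linarith
  rcases Set.eq_empty_or_nonempty t with rfl | hne
  · simp
  rcases eq_or_ne (EMetric.diam t) 0 with h0 | h0
  · rw [h0, ENNReal.zero_rpow_of_pos hs, mul_zero]
    rw [gpd_zero_of_le (a := volume {v : EuclideanSpace ℝ (Fin d) |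
        ∃ x ∈ closedBall (0 : EuclideanSpace ℝ (Fin k)) 1, F x + v ∈ t})
      (c := ENNReal.ofReal ((Real.sqrt k + 2) ^ k) * ENNReal.ofReal ((2 * L) ^ d) *
        volume (ball (0 : EuclideanSpace ℝ (Fin d)) 1)) ?_ ?_]
    · exact ENNReal.mul_ne_top (ENNReal.mul_ne_top ENNReal.ofReal_ne_top ENNReal.ofReal_ne_top)
        measure_ball_lt_top.ne
    · intro ρ hρ hρ1
      obtain ⟨N, hN, hvol⟩ := gpd_tube k d F hL hne hdiam hρ hρ1
      rw [h0] at hvol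
      simp only [ENNReal.toReal_zero, zero_add] at hvol
      have hrw : ENNReal.ofReal ((2 * (L:ℝ) * ρ) ^ d) =
          ENNReal.ofReal ((2 * L) ^ d) * ENNReal.ofReal (ρ ^ k) *
            ENNReal.ofReal (ρ ^ (d - k)) := by
        rw [← ENNReal.ofReal_mul (by positivity), ← ENNReal.ofReal_mul (by positivity)]
        congr 1
        rw [mul_pow, mul_assoc, ← pow_add, Nat.add_sub_cancel' hkd.le]
      calc volume {v : EuclideanSpace ℝ (Fin d) |
          ∃ x ∈ closedBall (0 : EuclideanSpace ℝ (Fin k)) 1, F x + v ∈ t}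
          ≤ (N : ℝ≥0∞) * (ENNReal.ofReal ((2 * L * ρ) ^ d) *
            volume (ball (0 : EuclideanSpace ℝ (Fin d)) 1)) := hvol
        _ = ((N : ℝ≥0∞) * ENNReal.ofReal (ρ ^ k)) * ENNReal.ofReal ((2 * L) ^ d) *
            volume (ball (0 : EuclideanSpace ℝ (Fin d)) 1) * ENNReal.ofReal (ρ ^ (d - k)) := by
            rw [hrw]; ring
        _ ≤ ENNReal.ofReal ((Real.sqrt k + 2) ^ k) * ENNReal.ofReal ((2 * L) ^ d) *
            volume (ball (0 : EuclideanSpace ℝ (Fin d)) 1) * ENNReal.ofReal ρ := by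
            gcongr
            exact pow_le_of_le_one hρ.le hρ1 (by omega)
  · set R := (EMetric.diam t).toReal with hRdef
    have hRpos : 0 < R := ENNReal.toReal_pos h0 hfin
    have hR1 : R ≤ 1 := by
      have := ENNReal.toReal_mono (by norm_num) hdiam
      simpa using this
    obtain ⟨N, hN, hvol⟩ := gpd_tube k d F hL hne hdiam hRpos hR1
    have hrw : ENNReal.ofReal ((R + 2 * L * R) ^ d) =
        ENNReal.ofReal ((1 + 2 * L) ^ d) * ENNReal.ofReal (R ^ k) *
          ENNReal.ofReal (R ^ (d - k)) := by
      rw [← ENNReal.ofReal_mul (by positivity), ← ENNReal.ofReal_mul (by positivity)]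
      congr 1
      have : R + 2 * (L:ℝ) * R = (1 + 2 * L) * R := by ring
      rw [this, mul_pow, mul_assoc, ← pow_add, Nat.add_sub_cancel' hkd.le]
    have hfinal : ENNReal.ofReal (R ^ (d - k)) = EMetric.diam t ^ ((d : ℝ) - (k : ℝ)) := by
      rw [ENNReal.ofReal_pow hRpos.le, hRdef, ENNReal.ofReal_toReal hfin,
        ← ENNReal.rpow_natCast]
      congr 1
      rw [Nat.cast_sub hkd.le]
    calc volume {v : EuclideanSpace ℝ (Fin d) |
        ∃ x ∈ closedBall (0 : EuclideanSpace ℝ (Fin k)) 1, F x + v ∈ t}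
        ≤ (N : ℝ≥0∞) * (ENNReal.ofReal ((R + 2 * L * R) ^ d) *
          volume (ball (0 : EuclideanSpace ℝ (Fin d)) 1)) := hvol
      _ = ((N : ℝ≥0∞) * ENNReal.ofReal (R ^ k)) * ENNReal.ofReal ((1 + 2 * L) ^ d) *
          volume (ball (0 : EuclideanSpace ℝ (Fin d)) 1) * ENNReal.ofReal (R ^ (d - k)) := by
          rw [hrw]; ring
      _ ≤ ENNReal.ofReal ((Real.sqrt k + 2) ^ k) * ENNReal.ofReal ((1 + 2 * L) ^ d) *
          volume (ball (0 : EuclideanSpace ℝ (Fin d)) 1) * ENNReal.ofReal (R ^ (d - k)) := by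
          gcongr
      _ = (ENNReal.ofReal ((Real.sqrt k + 2) ^ k) * ENNReal.ofReal ((1 + 2 * L) ^ d) *
          volume (ball (0 : EuclideanSpace ℝ (Fin d)) 1)) *
          EMetric.diam t ^ ((d : ℝ) - (k : ℝ)) := by rw [hfinal]


theorem general_position_dense (k d : ℕ) (hkd : k ≤ d)
    (S : Set (EuclideanSpace ℝ (Fin d))) (hS : μH[(d : ℝ) - (k : ℝ)] S = 0)
    (F : EuclideanSpace ℝ (Fin k) → EuclideanSpace ℝ (Fin d))
    (hF : ContDiff ℝ (⊤ : ℕ∞) F) (ε : ℝ) (hε : 0 < ε) :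
    ∃ G : EuclideanSpace ℝ (Fin k) → EuclideanSpace ℝ (Fin d),
      ContDiff ℝ (⊤ : ℕ∞) G ∧
      (∀ x ∈ Metric.closedBall (0 : EuclideanSpace ℝ (Fin k)) 1, G x ∉ S) ∧
      (∀ x ∈ Metric.closedBall (0 : EuclideanSpace ℝ (Fin k)) 1, ‖G x - F x‖ < ε) := by
  rcases eq_or_lt_of_le hkd with rfl | hkd'
  · -- k = d : S is empty
    rw [sub_self] at hS
    have hSe : S = ∅ := by
      by_contra h
      have h1 := Measure.one_le_hausdorffMeasure_zero_of_nonempty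
        (Set.nonempty_iff_ne_empty.2 h)
      rw [hS] at h1
      simp at h1
    refine ⟨F, hF, fun x _ => by simp [hSe], fun x _ => by simpa using hε⟩
  · -- k < d
    -- Step 1: `F` is Lipschitz on the closed unit ball.
    have hF1 : ContDiff ℝ 1 F := hF.of_le (mod_cast le_top)
    obtain ⟨C0, hC0⟩ := IsCompact.exists_bound_of_continuousOn
      (isCompact_closedBall (0 : EuclideanSpace ℝ (Fin k)) 1)
      (hF.continuous_fderiv (by simp)).continuousOn
    set L : ℝ≥0 := ⟨max C0 0, le_max_right _ _⟩ with hLdef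
    have hL : LipschitzOnWith L F (closedBall 0 1) := by
      apply Convex.lipschitzOnWith_of_nnnorm_fderiv_le
        (fun x _ => hF1.differentiable one_ne_zero x) ?_ (convex_closedBall _ _)
      intro x hx
      rw [← NNReal.coe_le_coe]
      calc (‖fderiv ℝ F x‖₊ : ℝ) = ‖fderiv ℝ F x‖ := by simp
        _ ≤ C0 := hC0 x hx
        _ ≤ max C0 0 := le_max_left _ _
    -- Step 2: the set of bad translations has measure zero.
    set bad := {v : EuclideanSpace ℝ (Fin d) |
      ∃ x ∈ closedBall (0 : EuclideanSpace ℝ (Fin k)) 1, F x + v ∈ S} with hbaddef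
    set C1 : ℝ≥0∞ := ENNReal.ofReal ((Real.sqrt k + 2) ^ k) *
      ENNReal.ofReal ((1 + 2 * L) ^ d) *
      volume (ball (0 : EuclideanSpace ℝ (Fin d)) 1) with hC1def
    have hC1 : C1 ≠ ⊤ :=
      ENNReal.mul_ne_top (ENNReal.mul_ne_top ENNReal.ofReal_ne_top ENNReal.ofReal_ne_top)
        measure_ball_lt_top.ne
    have h1 : (⨅ (t : ℕ → Set (EuclideanSpace ℝ (Fin d)))
        (_ : S ⊆ ⋃ n, t n) (_ : ∀ n, EMetric.diam (t n) ≤ 1),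
        ∑' n, ⨆ _ : (t n).Nonempty, EMetric.diam (t n) ^ ((d : ℝ) - (k : ℝ))) = 0 := by
      refine le_antisymm ?_ (zero_le)
      calc (⨅ (t : ℕ → Set (EuclideanSpace ℝ (Fin d)))
          (_ : S ⊆ ⋃ n, t n) (_ : ∀ n, EMetric.diam (t n) ≤ 1),
          ∑' n, ⨆ _ : (t n).Nonempty, EMetric.diam (t n) ^ ((d : ℝ) - (k : ℝ)))
          ≤ μH[(d : ℝ) - (k : ℝ)] S := by
            rw [MeasureTheory.Measure.hausdorffMeasure_apply]
            exact le_iSup₂_of_le 1 one_pos le_rfl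
        _ = 0 := hS
    have hbad : volume bad = 0 := by
      apply gpd_zero_of_le hC1
      intro ρ hρ hρ1
      have hη : (0 : ℝ≥0∞) < ENNReal.ofReal ρ := ENNReal.ofReal_pos.2 hρ
      have h2 : (⨅ (t : ℕ → Set (EuclideanSpace ℝ (Fin d)))
          (_ : S ⊆ ⋃ n, t n) (_ : ∀ n, EMetric.diam (t n) ≤ 1),
          ∑' n, ⨆ _ : (t n).Nonempty, EMetric.diam (t n) ^ ((d : ℝ) - (k : ℝ)))
          < ENNReal.ofReal ρ := h1 ▸ hη
      rw [iInf_lt_iff] at h2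
      obtain ⟨t, h2⟩ := h2
      rw [iInf_lt_iff] at h2
      obtain ⟨ht1, h2⟩ := h2
      rw [iInf_lt_iff] at h2
      obtain ⟨ht2, h2⟩ := h2
      have hsub : bad ⊆ ⋃ n, {v : EuclideanSpace ℝ (Fin d) |
          ∃ x ∈ closedBall (0 : EuclideanSpace ℝ (Fin k)) 1, F x + v ∈ t n} := by
        rintro v ⟨x, hx, hxS⟩
        obtain ⟨n, hn⟩ := Set.mem_iUnion.1 (ht1 hxS)
        exact Set.mem_iUnion.2 ⟨n, x, hx, hn⟩
      calc volume bad
          ≤ ∑' n, volume {v : EuclideanSpace ℝ (Fin d) |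
            ∃ x ∈ closedBall (0 : EuclideanSpace ℝ (Fin k)) 1, F x + v ∈ t n} :=
            (measure_mono hsub).trans (measure_iUnion_le _)
        _ ≤ ∑' n, C1 * ⨆ _ : (t n).Nonempty, EMetric.diam (t n) ^ ((d : ℝ) - (k : ℝ)) := by
            refine ENNReal.tsum_le_tsum fun n => ?_
            rcases Set.eq_empty_or_nonempty (t n) with he | hne
            · simp [he]
            · rw [iSup_pos hne]
              exact gpd_slab k d hkd' F hL (ht2 n)
        _ = C1 * ∑' n, ⨆ _ : (t n).Nonempty, EMetric.diam (t n) ^ ((d : ℝ) - (k : ℝ)) :=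
            ENNReal.tsum_mul_left
        _ ≤ C1 * ENNReal.ofReal ρ := mul_le_mul_right h2.le C1
    -- Step 3: pick a good small translation.
    have hball : ¬ (ball (0 : EuclideanSpace ℝ (Fin d)) ε ⊆ bad) := by
      intro hsub
      have h3 := (measure_mono hsub).trans hbad.le
      exact (measure_ball_pos volume (0 : EuclideanSpace ℝ (Fin d)) hε).ne'
        (le_antisymm h3 (zero_le))
    obtain ⟨v, hvball, hvbad⟩ := Set.not_subset.1 hball
    refine ⟨fun x => F x + v, hF.add contDiff_const, ?_, ?_⟩
    · intro x hx hmem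
      exact hvbad ⟨x, hx, hmem⟩
    · intro x _
      simpa using mem_ball_zero_iff.1 hvball
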